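/- Let p be a positive integer, C a real symmetric positive definite p×p matrix with largest eigenvalue λ_max(C), v ∈ ℝ^p nonzero, and ρ_1, ρ_2 > 0. Define θ(ξ) = ρ_1 ρ_2 ξ v^T (I_p − ξ C)^{−1} v, q(ξ) = (ξ²/p) tr(((I_p − ξ C)^{−1} C)²), s(ξ) = ρ_1 ρ_2 ξ² v^T (I_p − ξ C)^{−1} C (I_p − ξ C)^{−1} v, and assume there exists ξ_m ∈ (0, 1/λ_max(C)) with θ(ξ_m) = 1. For parameters c_l, c_u > 0 let ξ_sup(c_u) = ξ_m if q < c_u on (0, ξ_m) and otherwise the unique point of (0, ξ_m] where q equals c_u; on (0, ξ_sup(c_u)) define m_{c_l,c_u}(ξ) = 2 c_l θ(ξ)/(c_u (1 − θ(ξ))), σ²_{c_l,c_u}(ξ) = [ρ_1 ρ_2 (2 c_l + m_{c_l,c_u}(ξ) c_u)² s(ξ) + ρ_1 ρ_2 (4 c_l + m_{c_l,c_u}(ξ)² c_u) q(ξ)] / (c_u (c_u − q(ξ))), and for e > 0 let ξ_e(c_l, c_u) ∈ (0, ξ_sup(c_u)) be the unique solution of ρ_1 ρ_2 m_{c_l,c_u}(ξ)²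 + σ²_{c_l,c_u}(ξ) = e², and set r(c_l, c_u, e) = σ²_{c_l,c_u}(ξ_e(c_l,c_u)) / m_{c_l,c_u}(ξ_e(c_l,c_u))². Then for any e > 0 and any c_l' ≥ c_l, c_u' ≥ c_u with c_l' + c_u' > c_l + c_u, there exists e' > 0 such that r(c_l', c_u', e') < r(c_l, c_u, e). -/

import Mathlib

open Matrix BigOperators

/-- The resolvent `(I_p - ξ C)⁻¹`. -/
noncomputable def resolv (p : ℕ) (C : Matrix (Fin p) (Fin p) ℝ) (ξ : ℝ) :
    Matrix (Fin p) (Fin p) ℝ :=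
  ((1 : Matrix (Fin p) (Fin p) ℝ) - ξ • C)⁻¹

/-- `θ(ξ) = ρ₁ ρ₂ ξ vᵀ (I - ξC)⁻¹ v`. -/
noncomputable def theta (p : ℕ) (C : Matrix (Fin p) (Fin p) ℝ) (v : Fin p → ℝ)
    (ρ1 ρ2 ξ : ℝ) : ℝ :=
  ρ1 * ρ2 * ξ * (v ⬝ᵥ (resolv p C ξ *ᵥ v))

/-- `q(ξ) = (ξ²/p) tr( ((I - ξC)⁻¹ C)² )`. -/
noncomputable def qfun (p : ℕ) (C : Matrix (Fin p) (Fin p) ℝ) (ξ : ℝ) : ℝ :=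
  ξ ^ 2 / p * Matrix.trace ((resolv p C ξ * C) ^ 2)

/-- `s(ξ) = ρ₁ ρ₂ ξ² vᵀ (I - ξC)⁻¹ C (I - ξC)⁻¹ v`. -/
noncomputable def sfun (p : ℕ) (C : Matrix (Fin p) (Fin p) ℝ) (v : Fin p → ℝ)
    (ρ1 ρ2 ξ : ℝ) : ℝ :=
  ρ1 * ρ2 * ξ ^ 2 * (v ⬝ᵥ ((resolv p C ξ * C * resolv p C ξ) *ᵥ v))

/-- `m(ξ) = 2 c_l θ(ξ) / (c_u (1 - θ(ξ)))`. -/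
noncomputable def mfun (p : ℕ) (C : Matrix (Fin p) (Fin p) ℝ) (v : Fin p → ℝ)
    (ρ1 ρ2 cl cu ξ : ℝ) : ℝ :=
  2 * cl * theta p C v ρ1 ρ2 ξ / (cu * (1 - theta p C v ρ1 ρ2 ξ))

/-- `σ²(ξ) = [ρ₁ρ₂ (2c_l + m(ξ)c_u)² s(ξ) + ρ₁ρ₂ (4c_l + m(ξ)²c_u) q(ξ)] / (c_u (c_u - q(ξ)))`. -/
noncomputable def sigma2 (p : ℕ) (C : Matrix (Fin p) (Fin p) ℝ) (v : Fin p → ℝ)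
    (ρ1 ρ2 cl cu ξ : ℝ) : ℝ :=
  (ρ1 * ρ2 * (2 * cl + mfun p C v ρ1 ρ2 cl cu ξ * cu) ^ 2 * sfun p C v ρ1 ρ2 ξ
    + ρ1 * ρ2 * (4 * cl + (mfun p C v ρ1 ρ2 cl cu ξ) ^ 2 * cu) * qfun p C ξ)
  / (cu * (cu - qfun p C ξ))

section
variable {p : ℕ} {C : Matrix (Fin p) (Fin p) ℝ} (hC : C.PosDef)

lemma one_sub_smul_eq (ξ : ℝ) :
    (1 : Matrix (Fin p) (Fin p) ℝ) - ξ • C =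
      (hC.1.eigenvectorUnitary : Matrix (Fin p) (Fin p) ℝ) *
        Matrix.diagonal (fun i => 1 - ξ * hC.1.eigenvalues i) *
        (star hC.1.eigenvectorUnitary : Matrix (Fin p) (Fin p) ℝ) := by
  have hsp := hC.1.spectral_theorem
  simp only [RCLike.ofReal_real_eq_id, Function.comp_def, id_eq] at hsp
  have hU : (hC.1.eigenvectorUnitary : Matrix (Fin p) (Fin p) ℝ) *
      (star hC.1.eigenvectorUnitary : Matrix (Fin p) (Fin p) ℝ) = 1 :=
    (Matrix.mem_unitaryGroup_iff).mp hC.1.eigenvectorUnitary.2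
  have hdiag : Matrix.diagonal (fun i => 1 - ξ * hC.1.eigenvalues i)
      = (1 : Matrix (Fin p) (Fin p) ℝ) - ξ • Matrix.diagonal (fun i => hC.1.eigenvalues i) := by
    ext i j
    by_cases h : i = j <;> simp [Matrix.diagonal, h, Matrix.one_apply, Matrix.sub_apply]
  rw [hdiag, Matrix.mul_sub, Matrix.sub_mul, Matrix.mul_one, hU, Matrix.mul_smul,
    Matrix.smul_mul]
  exact congrArg (fun M => 1 - ξ • M) hsp

lemma resolv_eq (ξ : ℝ) (hd : ∀ i, 1 - ξ * hC.1.eigenvalues i ≠ 0) :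
    resolv p C ξ =
      (hC.1.eigenvectorUnitary : Matrix (Fin p) (Fin p) ℝ) *
        Matrix.diagonal (fun i => (1 - ξ * hC.1.eigenvalues i)⁻¹) *
        (star hC.1.eigenvectorUnitary : Matrix (Fin p) (Fin p) ℝ) := by
  set U := (hC.1.eigenvectorUnitary : Matrix (Fin p) (Fin p) ℝ)
  have hU : U * star U = 1 := (Matrix.mem_unitaryGroup_iff).mp hC.1.eigenvectorUnitary.2
  have hU' : star U * U = 1 := (Matrix.mem_unitaryGroup_iff').mp hC.1.eigenvectorUnitary.2
  rw [resolv, one_sub_smul_eq hC ξ]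
  apply Matrix.inv_eq_right_inv
  calc U * Matrix.diagonal (fun i => 1 - ξ * hC.1.eigenvalues i) * star U *
        (U * Matrix.diagonal (fun i => (1 - ξ * hC.1.eigenvalues i)⁻¹) * star U)
      = U * (Matrix.diagonal (fun i => 1 - ξ * hC.1.eigenvalues i) * ((star U * U) *
          Matrix.diagonal (fun i => (1 - ξ * hC.1.eigenvalues i)⁻¹))) * star U := by
        noncomm_ring
    _ = 1 := by
        rw [hU', one_mul, Matrix.diagonal_mul_diagonal]
        have : (fun i => (1 - ξ * hC.1.eigenvalues i) * (1 - ξ * hC.1.eigenvalues i)⁻¹)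
            = fun _ => (1:ℝ) := by
          funext i; exact mul_inv_cancel₀ (hd i)
        rw [this, Matrix.diagonal_one, Matrix.mul_one, hU]

lemma star_eigU_eq_transpose :
    (star (hC.1.eigenvectorUnitary : Matrix (Fin p) (Fin p) ℝ)) =
      (hC.1.eigenvectorUnitary : Matrix (Fin p) (Fin p) ℝ)ᵀ := by
  rw [Matrix.star_eq_conjTranspose]
  ext i j
  simp [Matrix.conjTranspose_apply]

lemma quad_eq (f : Fin p → ℝ) (v : Fin p → ℝ) :
    v ⬝ᵥ (((hC.1.eigenvectorUnitary : Matrix (Fin p) (Fin p) ℝ) *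
        Matrix.diagonal f * (star hC.1.eigenvectorUnitary : Matrix (Fin p) (Fin p) ℝ)) *ᵥ v)
      = ∑ i, f i * (((star hC.1.eigenvectorUnitary : Matrix (Fin p) (Fin p) ℝ) *ᵥ v) i)^2 := by
  set U := (hC.1.eigenvectorUnitary : Matrix (Fin p) (Fin p) ℝ)
  set w := (star U) *ᵥ v with hw
  have h1 : (U * Matrix.diagonal f * star U) *ᵥ v = U *ᵥ (Matrix.diagonal f *ᵥ w) := by
    rw [hw, Matrix.mulVec_mulVec, Matrix.mulVec_mulVec]
  rw [h1, Matrix.dotProduct_mulVec]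
  have h2 : v ᵥ* U = w := by
    rw [hw, star_eigU_eq_transpose hC, Matrix.mulVec_transpose]
  rw [h2]
  simp [dotProduct, Matrix.mulVec_diagonal, pow_two]
  exact Finset.sum_congr rfl (fun i _ => by ring)

lemma conj_mul_conj (A B : Matrix (Fin p) (Fin p) ℝ) :
    ((hC.1.eigenvectorUnitary : Matrix (Fin p) (Fin p) ℝ) * A *
      (star hC.1.eigenvectorUnitary : Matrix (Fin p) (Fin p) ℝ)) *
    ((hC.1.eigenvectorUnitary : Matrix (Fin p) (Fin p) ℝ) * B *
      (star hC.1.eigenvectorUnitary : Matrix (Fin p) (Fin p) ℝ)) =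
    (hC.1.eigenvectorUnitary : Matrix (Fin p) (Fin p) ℝ) * (A * B) *
      (star hC.1.eigenvectorUnitary : Matrix (Fin p) (Fin p) ℝ) := by
  set U := (hC.1.eigenvectorUnitary : Matrix (Fin p) (Fin p) ℝ)
  have hU' : star U * U = 1 := (Matrix.mem_unitaryGroup_iff').mp hC.1.eigenvectorUnitary.2
  calc U * A * star U * (U * B * star U) = U * (A * ((star U * U) * B)) * star U := by noncomm_ring
    _ = _ := by rw [hU', one_mul]

lemma trace_conj (A : Matrix (Fin p) (Fin p) ℝ) :
    Matrix.trace ((hC.1.eigenvectorUnitary : Matrix (Fin p) (Fin p) ℝ) * A *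
      (star hC.1.eigenvectorUnitary : Matrix (Fin p) (Fin p) ℝ)) = Matrix.trace A := by
  set U := (hC.1.eigenvectorUnitary : Matrix (Fin p) (Fin p) ℝ)
  have hU' : star U * U = 1 := (Matrix.mem_unitaryGroup_iff').mp hC.1.eigenvectorUnitary.2
  rw [Matrix.trace_mul_cycle, hU', one_mul]

lemma C_eq_conj :
    C = (hC.1.eigenvectorUnitary : Matrix (Fin p) (Fin p) ℝ) *
        Matrix.diagonal (fun i => hC.1.eigenvalues i) *
        (star hC.1.eigenvectorUnitary : Matrix (Fin p) (Fin p) ℝ) := by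
  have hsp := hC.1.spectral_theorem
  simp only [RCLike.ofReal_real_eq_id, Function.comp_def, id_eq] at hsp
  exact hsp

lemma theta_eq (v : Fin p → ℝ) (ρ1 ρ2 ξ : ℝ) (hd : ∀ i, 1 - ξ * hC.1.eigenvalues i ≠ 0) :
    theta p C v ρ1 ρ2 ξ = ρ1 * ρ2 *
      ∑ i, (((star hC.1.eigenvectorUnitary : Matrix (Fin p) (Fin p) ℝ) *ᵥ v) i)^2 *
        (ξ * (1 - ξ * hC.1.eigenvalues i)⁻¹) := by
  rw [theta, resolv_eq hC ξ hd, quad_eq hC, Finset.mul_sum, Finset.mul_sum]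
  exact Finset.sum_congr rfl (fun i _ => by ring)

lemma sfun_eq (v : Fin p → ℝ) (ρ1 ρ2 ξ : ℝ) (hd : ∀ i, 1 - ξ * hC.1.eigenvalues i ≠ 0) :
    sfun p C v ρ1 ρ2 ξ = ρ1 * ρ2 *
      ∑ i, (((star hC.1.eigenvectorUnitary : Matrix (Fin p) (Fin p) ℝ) *ᵥ v) i)^2 *
        (hC.1.eigenvalues i * (ξ * (1 - ξ * hC.1.eigenvalues i)⁻¹)^2) := by
  have key : resolv p C ξ * C * resolv p C ξ =
      (hC.1.eigenvectorUnitary : Matrix (Fin p) (Fin p) ℝ) *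
        Matrix.diagonal (fun i => (1 - ξ * hC.1.eigenvalues i)⁻¹ * hC.1.eigenvalues i *
          (1 - ξ * hC.1.eigenvalues i)⁻¹) *
        (star hC.1.eigenvectorUnitary : Matrix (Fin p) (Fin p) ℝ) := by
    rw [resolv_eq hC ξ hd]
    have h3 : ((hC.1.eigenvectorUnitary : Matrix (Fin p) (Fin p) ℝ) *
          Matrix.diagonal (fun i => (1 - ξ * hC.1.eigenvalues i)⁻¹) *
          (star hC.1.eigenvectorUnitary : Matrix (Fin p) (Fin p) ℝ)) * C *
        ((hC.1.eigenvectorUnitary : Matrix (Fin p) (Fin p) ℝ) *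
          Matrix.diagonal (fun i => (1 - ξ * hC.1.eigenvalues i)⁻¹) *
          (star hC.1.eigenvectorUnitary : Matrix (Fin p) (Fin p) ℝ)) =
        ((hC.1.eigenvectorUnitary : Matrix (Fin p) (Fin p) ℝ) *
          Matrix.diagonal (fun i => (1 - ξ * hC.1.eigenvalues i)⁻¹) *
          (star hC.1.eigenvectorUnitary : Matrix (Fin p) (Fin p) ℝ)) *
        ((hC.1.eigenvectorUnitary : Matrix (Fin p) (Fin p) ℝ) *
          Matrix.diagonal (fun i => hC.1.eigenvalues i) *
          (star hC.1.eigenvectorUnitary : Matrix (Fin p) (Fin p) ℝ)) *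
        ((hC.1.eigenvectorUnitary : Matrix (Fin p) (Fin p) ℝ) *
          Matrix.diagonal (fun i => (1 - ξ * hC.1.eigenvalues i)⁻¹) *
          (star hC.1.eigenvectorUnitary : Matrix (Fin p) (Fin p) ℝ)) := by
      rw [← C_eq_conj hC]
    rw [h3, conj_mul_conj hC, conj_mul_conj hC, Matrix.diagonal_mul_diagonal,
      Matrix.diagonal_mul_diagonal]
  rw [sfun, key, quad_eq hC, Finset.mul_sum, Finset.mul_sum]
  refine Finset.sum_congr rfl (fun i _ => ?_)
  field_simp

lemma qfun_eq (ξ : ℝ) (hd : ∀ i, 1 - ξ * hC.1.eigenvalues i ≠ 0) :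
    qfun p C ξ = (∑ i, (hC.1.eigenvalues i * (ξ * (1 - ξ * hC.1.eigenvalues i)⁻¹))^2) / p := by
  have key : resolv p C ξ * C =
      (hC.1.eigenvectorUnitary : Matrix (Fin p) (Fin p) ℝ) *
        Matrix.diagonal (fun i => (1 - ξ * hC.1.eigenvalues i)⁻¹ * hC.1.eigenvalues i) *
        (star hC.1.eigenvectorUnitary : Matrix (Fin p) (Fin p) ℝ) := by
    rw [resolv_eq hC ξ hd]
    have h3 : ((hC.1.eigenvectorUnitary : Matrix (Fin p) (Fin p) ℝ) *
          Matrix.diagonal (fun i => (1 - ξ * hC.1.eigenvalues i)⁻¹) *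
          (star hC.1.eigenvectorUnitary : Matrix (Fin p) (Fin p) ℝ)) * C =
        ((hC.1.eigenvectorUnitary : Matrix (Fin p) (Fin p) ℝ) *
          Matrix.diagonal (fun i => (1 - ξ * hC.1.eigenvalues i)⁻¹) *
          (star hC.1.eigenvectorUnitary : Matrix (Fin p) (Fin p) ℝ)) *
        ((hC.1.eigenvectorUnitary : Matrix (Fin p) (Fin p) ℝ) *
          Matrix.diagonal (fun i => hC.1.eigenvalues i) *
          (star hC.1.eigenvectorUnitary : Matrix (Fin p) (Fin p) ℝ)) := by
      rw [← C_eq_conj hC]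
    rw [h3, conj_mul_conj hC, Matrix.diagonal_mul_diagonal]
  have key2 : (resolv p C ξ * C) ^ 2 =
      (hC.1.eigenvectorUnitary : Matrix (Fin p) (Fin p) ℝ) *
        Matrix.diagonal (fun i => ((1 - ξ * hC.1.eigenvalues i)⁻¹ * hC.1.eigenvalues i) *
          ((1 - ξ * hC.1.eigenvalues i)⁻¹ * hC.1.eigenvalues i)) *
        (star hC.1.eigenvectorUnitary : Matrix (Fin p) (Fin p) ℝ) := by
    rw [pow_two, key, conj_mul_conj hC, Matrix.diagonal_mul_diagonal]
  rw [qfun, key2, trace_conj hC, Matrix.trace_diagonal]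
  rw [Finset.sum_div, Finset.mul_sum]
  exact Finset.sum_congr rfl (fun i _ => by rw [div_eq_mul_inv, div_eq_mul_inv]; ring)

end

lemma flt {ξ1 ξ2 lam : ℝ} (h1 : 0 < ξ1) (h12 : ξ1 < ξ2)
    (hd1 : 0 < 1 - ξ1 * lam) (hd2 : 0 < 1 - ξ2 * lam) :
    ξ1 * (1 - ξ1 * lam)⁻¹ < ξ2 * (1 - ξ2 * lam)⁻¹ := by
  rw [← div_eq_mul_inv, ← div_eq_mul_inv, div_lt_div_iff₀ hd1 hd2]
  nlinarith

lemma fpos {ξ lam : ℝ} (h : 0 < ξ) (hd : 0 < 1 - ξ * lam) : 0 < ξ * (1 - ξ * lam)⁻¹ :=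
  mul_pos h (inv_pos.mpr hd)

section
variable {p : ℕ} {C : Matrix (Fin p) (Fin p) ℝ} {lmax : ℝ}

lemma lmax_pos (hC : C.PosDef) (hlmax : IsGreatest (Set.range hC.1.eigenvalues) lmax) : 0 < lmax := by
  obtain ⟨i, hi⟩ := hlmax.1
  exact hi ▸ hC.eigenvalues_pos i

lemma denom_pos (hC : C.PosDef) (hlmax : IsGreatest (Set.range hC.1.eigenvalues) lmax) {ξ : ℝ} (h0 : 0 < ξ) (h1 : ξ < lmax⁻¹) (i : Fin p) :
    0 < 1 - ξ * hC.1.eigenvalues i := by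
  have hl := lmax_pos hC hlmax
  have hle : hC.1.eigenvalues i ≤ lmax := hlmax.2 (Set.mem_range_self i)
  have : ξ * hC.1.eigenvalues i ≤ ξ * lmax := by
    exact mul_le_mul_of_nonneg_left hle (le_of_lt h0)
  have h2 : ξ * lmax < 1 := by
    have := (lt_div_iff₀ hl).mp (by rwa [← one_div] at h1)
    linarith
  linarith

lemma w_exists_ne (hC : C.PosDef) (v : Fin p → ℝ) (hv : v ≠ 0) :
    ∃ i, ((star hC.1.eigenvectorUnitary : Matrix (Fin p) (Fin p) ℝ) *ᵥ v) i ≠ 0 := by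
  by_contra h
  push_neg at h
  apply hv
  have hw0 : (star hC.1.eigenvectorUnitary : Matrix (Fin p) (Fin p) ℝ) *ᵥ v = 0 := funext h
  have hU : (hC.1.eigenvectorUnitary : Matrix (Fin p) (Fin p) ℝ) *
      (star hC.1.eigenvectorUnitary : Matrix (Fin p) (Fin p) ℝ) = 1 :=
    (Matrix.mem_unitaryGroup_iff).mp hC.1.eigenvectorUnitary.2
  have : (hC.1.eigenvectorUnitary : Matrix (Fin p) (Fin p) ℝ) *ᵥ
      ((star hC.1.eigenvectorUnitary : Matrix (Fin p) (Fin p) ℝ) *ᵥ v) = v := by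
    rw [Matrix.mulVec_mulVec, hU, Matrix.one_mulVec]
  rw [hw0, Matrix.mulVec_zero] at this
  exact this.symm

variable {v : Fin p → ℝ} {ρ1 ρ2 : ℝ}

lemma theta_pos (hC : C.PosDef) (hlmax : IsGreatest (Set.range hC.1.eigenvalues) lmax) (hv : v ≠ 0) (hρ1 : 0 < ρ1) (hρ2 : 0 < ρ2) {ξ : ℝ} (h0 : 0 < ξ) (h1 : ξ < lmax⁻¹) :
    0 < theta p C v ρ1 ρ2 ξ := by
  rw [theta_eq hC v ρ1 ρ2 ξ (fun i => ne_of_gt (denom_pos hC hlmax h0 h1 i))]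
  apply mul_pos (mul_pos hρ1 hρ2)
  obtain ⟨i0, hi0⟩ := w_exists_ne hC v hv
  refine Finset.sum_pos' (fun i _ => ?_) ⟨i0, Finset.mem_univ i0, ?_⟩
  · exact mul_nonneg (sq_nonneg _) (le_of_lt (fpos h0 (denom_pos hC hlmax h0 h1 i)))
  · exact mul_pos (by positivity) (fpos h0 (denom_pos hC hlmax h0 h1 i0))

lemma theta_mono (hC : C.PosDef) (hlmax : IsGreatest (Set.range hC.1.eigenvalues) lmax) (hv : v ≠ 0) (hρ1 : 0 < ρ1) (hρ2 : 0 < ρ2) {ξ1 ξ2 : ℝ} (h0 : 0 < ξ1) (h12 : ξ1 < ξ2) (h1 : ξ2 < lmax⁻¹) :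
    theta p C v ρ1 ρ2 ξ1 < theta p C v ρ1 ρ2 ξ2 := by
  have h02 : 0 < ξ2 := lt_trans h0 h12
  have h1' : ξ1 < lmax⁻¹ := lt_trans h12 h1
  have hd1 := fun i => denom_pos hC hlmax h0 h1' i
  have hd2 := fun i => denom_pos hC hlmax h02 h1 i
  rw [theta_eq hC v ρ1 ρ2 ξ1 (fun i => ne_of_gt (hd1 i)),
    theta_eq hC v ρ1 ρ2 ξ2 (fun i => ne_of_gt (hd2 i))]
  refine mul_lt_mul_of_pos_left ?_ (mul_pos hρ1 hρ2)
  obtain ⟨i0, hi0⟩ := w_exists_ne hC v hv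
  refine Finset.sum_lt_sum (fun i _ => ?_) ⟨i0, Finset.mem_univ i0, ?_⟩
  · exact mul_le_mul_of_nonneg_left (le_of_lt (flt h0 h12 (hd1 i) (hd2 i))) (sq_nonneg _)
  · exact mul_lt_mul_of_pos_left (flt h0 h12 (hd1 i0) (hd2 i0)) (by positivity)

lemma sfun_pos (hC : C.PosDef) (hlmax : IsGreatest (Set.range hC.1.eigenvalues) lmax) (hv : v ≠ 0) (hρ1 : 0 < ρ1) (hρ2 : 0 < ρ2) {ξ : ℝ} (h0 : 0 < ξ) (h1 : ξ < lmax⁻¹) :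
    0 < sfun p C v ρ1 ρ2 ξ := by
  rw [sfun_eq hC v ρ1 ρ2 ξ (fun i => ne_of_gt (denom_pos hC hlmax h0 h1 i))]
  apply mul_pos (mul_pos hρ1 hρ2)
  obtain ⟨i0, hi0⟩ := w_exists_ne hC v hv
  refine Finset.sum_pos' (fun i _ => ?_) ⟨i0, Finset.mem_univ i0, ?_⟩
  · have := hC.eigenvalues_pos i
    have := fpos h0 (denom_pos hC hlmax h0 h1 i)
    positivity
  · have := hC.eigenvalues_pos i0
    have := fpos h0 (denom_pos hC hlmax h0 h1 i0)
    positivity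

lemma sfun_mono (hC : C.PosDef) (hlmax : IsGreatest (Set.range hC.1.eigenvalues) lmax) (hv : v ≠ 0) (hρ1 : 0 < ρ1) (hρ2 : 0 < ρ2) {ξ1 ξ2 : ℝ} (h0 : 0 < ξ1) (h12 : ξ1 < ξ2) (h1 : ξ2 < lmax⁻¹) :
    sfun p C v ρ1 ρ2 ξ1 < sfun p C v ρ1 ρ2 ξ2 := by
  have h02 : 0 < ξ2 := lt_trans h0 h12
  have h1' : ξ1 < lmax⁻¹ := lt_trans h12 h1
  have hd1 := fun i => denom_pos hC hlmax h0 h1' i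
  have hd2 := fun i => denom_pos hC hlmax h02 h1 i
  rw [sfun_eq hC v ρ1 ρ2 ξ1 (fun i => ne_of_gt (hd1 i)),
    sfun_eq hC v ρ1 ρ2 ξ2 (fun i => ne_of_gt (hd2 i))]
  refine mul_lt_mul_of_pos_left ?_ (mul_pos hρ1 hρ2)
  obtain ⟨i0, hi0⟩ := w_exists_ne hC v hv
  have hterm : ∀ i, hC.1.eigenvalues i * (ξ1 * (1 - ξ1 * hC.1.eigenvalues i)⁻¹)^2
      < hC.1.eigenvalues i * (ξ2 * (1 - ξ2 * hC.1.eigenvalues i)⁻¹)^2 := by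
    intro i
    have hlam := hC.eigenvalues_pos i
    have hf1 := fpos h0 (hd1 i)
    have hf2 := flt h0 h12 (hd1 i) (hd2 i)
    have : (ξ1 * (1 - ξ1 * hC.1.eigenvalues i)⁻¹)^2 < (ξ2 * (1 - ξ2 * hC.1.eigenvalues i)⁻¹)^2 :=
      pow_lt_pow_left₀ hf2 (le_of_lt hf1) (by norm_num)
    exact mul_lt_mul_of_pos_left this hlam
  refine Finset.sum_lt_sum (fun i _ => ?_) ⟨i0, Finset.mem_univ i0, ?_⟩
  · exact mul_le_mul_of_nonneg_left (le_of_lt (hterm i)) (sq_nonneg _)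
  · exact mul_lt_mul_of_pos_left (hterm i0) (by positivity)

lemma qfun_pos (hC : C.PosDef) (hlmax : IsGreatest (Set.range hC.1.eigenvalues) lmax) (hp : 0 < p) {ξ : ℝ} (h0 : 0 < ξ) (h1 : ξ < lmax⁻¹) :
    0 < qfun p C ξ := by
  rw [qfun_eq hC ξ (fun i => ne_of_gt (denom_pos hC hlmax h0 h1 i))]
  apply div_pos ?_ (by exact_mod_cast hp)
  refine Finset.sum_pos (fun i _ => ?_) (by simp [Finset.univ_nonempty_iff, Fin.pos_iff_nonempty.mp hp])
  have := hC.eigenvalues_pos i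
  have := fpos h0 (denom_pos hC hlmax h0 h1 i)
  positivity

lemma qfun_mono (hC : C.PosDef) (hlmax : IsGreatest (Set.range hC.1.eigenvalues) lmax) (hp : 0 < p) {ξ1 ξ2 : ℝ} (h0 : 0 < ξ1) (h12 : ξ1 < ξ2) (h1 : ξ2 < lmax⁻¹) :
    qfun p C ξ1 < qfun p C ξ2 := by
  have h02 : 0 < ξ2 := lt_trans h0 h12
  have h1' : ξ1 < lmax⁻¹ := lt_trans h12 h1
  have hd1 := fun i => denom_pos hC hlmax h0 h1' i
  have hd2 := fun i => denom_pos hC hlmax h02 h1 i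
  rw [qfun_eq hC ξ1 (fun i => ne_of_gt (hd1 i)), qfun_eq hC ξ2 (fun i => ne_of_gt (hd2 i))]
  have hp' : (0:ℝ) < p := by exact_mod_cast hp
  rw [div_lt_div_iff₀ hp' hp']
  apply mul_lt_mul_of_pos_right ?_ hp'
  have hterm : ∀ i, (hC.1.eigenvalues i * (ξ1 * (1 - ξ1 * hC.1.eigenvalues i)⁻¹))^2
      < (hC.1.eigenvalues i * (ξ2 * (1 - ξ2 * hC.1.eigenvalues i)⁻¹))^2 := by
    intro i
    have hlam := hC.eigenvalues_pos i
    have hf1 := fpos h0 (hd1 i)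
    have hf2 := flt h0 h12 (hd1 i) (hd2 i)
    have hb : 0 ≤ hC.1.eigenvalues i * (ξ1 * (1 - ξ1 * hC.1.eigenvalues i)⁻¹) := by positivity
    exact pow_lt_pow_left₀ (mul_lt_mul_of_pos_left hf2 hlam) hb (by norm_num)
  exact Finset.sum_lt_sum (fun i _ => le_of_lt (hterm i)) ⟨⟨0, hp⟩, Finset.mem_univ _, hterm _⟩

end

lemma Fmono (ρ cl cu t1 t2 Q1 Q2 S1 S2 : ℝ) (hρ : 0 < ρ) (hcl : 0 < cl) (hcu : 0 < cu)
    (ht1 : 0 < t1) (ht : t1 < t2) (ht2 : t2 < 1) (hQ1 : 0 < Q1) (hQ : Q1 < Q2) (hQ2 : Q2 < cu)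
    (hS1 : 0 < S1) (hS : S1 < S2) :
    ρ * (2*cl*t1/(cu*(1-t1)))^2 +
      (ρ*(2*cl + 2*cl*t1/(cu*(1-t1))*cu)^2*S1 + ρ*(4*cl + (2*cl*t1/(cu*(1-t1)))^2*cu)*Q1)
        /(cu*(cu-Q1))
    < ρ * (2*cl*t2/(cu*(1-t2)))^2 +
      (ρ*(2*cl + 2*cl*t2/(cu*(1-t2))*cu)^2*S2 + ρ*(4*cl + (2*cl*t2/(cu*(1-t2)))^2*cu)*Q2)
        /(cu*(cu-Q2)) := by
  have form : ∀ t Q S : ℝ, 0 < t → t < 1 → 0 < Q → Q < cu →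
      ρ * (2*cl*t/(cu*(1-t)))^2 +
        (ρ*(2*cl + 2*cl*t/(cu*(1-t))*cu)^2*S + ρ*(4*cl + (2*cl*t/(cu*(1-t)))^2*cu)*Q)
          /(cu*(cu-Q))
      = ρ*(4*cl^2/cu^2)*(t/(1-t))^2 +
        (ρ*4*cl^2*(1+t/(1-t))^2*S + (ρ*4*cl + ρ*4*cl^2*(t/(1-t))^2/cu)*Q)/(cu*(cu-Q)) := by
    intro t Q S ht0 ht1' hQ0 hQcu
    have h1 : (1:ℝ) - t ≠ 0 := by linarith
    have h2 : cu ≠ 0 := ne_of_gt hcu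
    have h3 : cu - Q ≠ 0 := by linarith
    field_simp
    ring
  rw [form t1 Q1 S1 ht1 (lt_trans ht ht2) hQ1 (lt_trans hQ hQ2),
    form t2 Q2 S2 (lt_trans ht1 ht) ht2 (lt_trans hQ1 hQ) hQ2]
  have h1t1 : (0:ℝ) < 1 - t1 := by linarith
  have h1t2 : (0:ℝ) < 1 - t2 := by linarith
  have hT1 : 0 < t1/(1-t1) := div_pos ht1 h1t1
  have hT : t1/(1-t1) < t2/(1-t2) := by
    rw [div_lt_div_iff₀ h1t1 h1t2]; nlinarith
  have hT2 : 0 < t2/(1-t2) := lt_trans hT1 hT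
  have hS2 : 0 < S2 := lt_trans hS1 hS
  have hQ2' : 0 < Q2 := lt_trans hQ1 hQ
  have hcuQ2 : 0 < cu - Q2 := by linarith
  have hcuQ1 : 0 < cu - Q1 := by linarith
  apply add_lt_add_of_lt_of_le
  · have : (t1/(1-t1))^2 < (t2/(1-t2))^2 := by
      exact pow_lt_pow_left₀ hT hT1.le (by norm_num)
    exact mul_lt_mul_of_pos_left this (mul_pos hρ (div_pos (by nlinarith) (by nlinarith)))
  · apply div_le_div₀ (by positivity) ?_ (by nlinarith) ?_
    · have e1 : (1+t1/(1-t1))^2 ≤ (1+t2/(1-t2))^2 := by nlinarith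
      have e2 : (t1/(1-t1))^2 ≤ (t2/(1-t2))^2 := by nlinarith
      have := hS1.le
      gcongr <;> nlinarith
    · nlinarith

lemma ratio_lt (ρ t Q S cl cu cl' cu' : ℝ) (hρ : 0 < ρ) (ht0 : 0 < t) (ht1 : t < 1)
    (hQ : 0 < Q) (hS : 0 < S) (hcl : 0 < cl) (hcu : 0 < cu)
    (hQcu : Q < cu) (hQcu' : Q < cu') (hcl' : cl ≤ cl') (hcu' : cu ≤ cu')
    (hsum : cl + cu < cl' + cu') :
    (ρ*(2*cl' + 2*cl'*t/(cu'*(1-t))*cu')^2*S + ρ*(4*cl' + (2*cl'*t/(cu'*(1-t)))^2*cu')*Q)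
        /(cu'*(cu'-Q)) / (2*cl'*t/(cu'*(1-t)))^2
    < (ρ*(2*cl + 2*cl*t/(cu*(1-t))*cu)^2*S + ρ*(4*cl + (2*cl*t/(cu*(1-t)))^2*cu)*Q)
        /(cu*(cu-Q)) / (2*cl*t/(cu*(1-t)))^2 := by
  have h1t : (0:ℝ) < 1 - t := by linarith
  have hcl'0 : 0 < cl' := lt_of_lt_of_le hcl hcl'
  have hcu'0 : 0 < cu' := lt_of_lt_of_le hcu hcu'
  have form : ∀ c u : ℝ, 0 < c → Q < u →
      (ρ*(2*c + 2*c*t/(u*(1-t))*u)^2*S + ρ*(4*c + (2*c*t/(u*(1-t)))^2*u)*Q)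
          /(u*(u-Q)) / (2*c*t/(u*(1-t)))^2
      = ρ*((1-t)/t)^2 * (S/(1-t)^2 + Q/c +
          (Q*(S/(1-t)^2 + Q/c) + (t/(1-t))^2*Q)/(u-Q)) := by
    intro c u hc hu
    have h2 : c ≠ 0 := ne_of_gt hc
    have h3 : u ≠ 0 := by nlinarith
    have h4 : u - Q ≠ 0 := by nlinarith
    have h5 : t ≠ 0 := ne_of_gt ht0
    have h6 : (1:ℝ) - t ≠ 0 := ne_of_gt h1t
    field_simp
    ring
  rw [form cl cu hcl hQcu, form cl' cu' hcl'0 hQcu']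
  apply mul_lt_mul_of_pos_left ?_ (by positivity)
  have key : Q/cl' + (Q*(S/(1-t)^2 + Q/cl') + (t/(1-t))^2*Q)/(cu'-Q)
      < Q/cl + (Q*(S/(1-t)^2 + Q/cl) + (t/(1-t))^2*Q)/(cu-Q) := by
    rcases lt_or_ge cl cl' with hltcl | hgecl
    · have hQcstrict : Q/cl' < Q/cl := div_lt_div_of_pos_left hQ hcl hltcl
      apply add_lt_add_of_lt_of_le hQcstrict
      apply div_le_div₀ ?_ ?_ (by linarith) (by linarith)
      · have : 0 < Q/cl' := div_pos hQ hcl'0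
        positivity
      · have hQc : Q/cl' ≤ Q/cl := div_le_div_of_nonneg_left hQ.le hcl hcl'
        nlinarith
    · have hcleq : cl' = cl := le_antisymm hgecl hcl'
      subst hcleq
      have hltcu : cu < cu' := by linarith
      apply add_lt_add_right
      apply div_lt_div_of_pos_left ?_ (by linarith) (by linarith)
      have : 0 < Q/cl' := div_pos hQ hcl
      positivity
  linarith


/-- consistency of the centered-similarities regularization: with
`ξ_sup(c_u)` defined from `ξ_m` and `q` as in the text, and `ξ_e(c_l, c_u, e)` the unique
solution in `(0, ξ_sup(c_u))` of `ρ₁ρ₂ m(ξ)² + σ²(ξ) = e²`, the inverse performance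
measure `r(c_l, c_u, e) = σ²(ξ_e)/m(ξ_e)²` satisfies: for any `e > 0` and
`c_l' ≥ c_l`, `c_u' ≥ c_u` with `c_l' + c_u' > c_l + c_u`, there exists `e' > 0` with
`r(c_l', c_u', e') < r(c_l, c_u, e)`. -/
theorem stmt18 (p : ℕ) (hp : 0 < p) (C : Matrix (Fin p) (Fin p) ℝ) (hC : C.PosDef)
    (lmax : ℝ) (hlmax : IsGreatest (Set.range hC.1.eigenvalues) lmax)
    (v : Fin p → ℝ) (hv : v ≠ 0) (ρ1 ρ2 : ℝ) (hρ1 : 0 < ρ1) (hρ2 : 0 < ρ2)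
    (ξm : ℝ) (hξm : ξm ∈ Set.Ioo (0 : ℝ) lmax⁻¹) (hθξm : theta p C v ρ1 ρ2 ξm = 1)
    (ξsup : ℝ → ℝ)
    (hξsup : ∀ cu : ℝ, 0 < cu →
      ((∀ ξ ∈ Set.Ioo (0 : ℝ) ξm, qfun p C ξ < cu) → ξsup cu = ξm) ∧
      (¬ (∀ ξ ∈ Set.Ioo (0 : ℝ) ξm, qfun p C ξ < cu) →
        ξsup cu ∈ Set.Ioc (0 : ℝ) ξm ∧ qfun p C (ξsup cu) = cu))
    (ξe : ℝ → ℝ → ℝ → ℝ)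
    (hξe : ∀ cl cu e : ℝ, 0 < cl → 0 < cu → 0 < e →
      ξe cl cu e ∈ Set.Ioo (0 : ℝ) (ξsup cu) ∧
      ρ1 * ρ2 * (mfun p C v ρ1 ρ2 cl cu (ξe cl cu e)) ^ 2 +
        sigma2 p C v ρ1 ρ2 cl cu (ξe cl cu e) = e ^ 2)
    (cl cu cl' cu' e : ℝ) (hcl : 0 < cl) (hcu : 0 < cu) (he : 0 < e)
    (hcl' : cl ≤ cl') (hcu' : cu ≤ cu') (hsum : cl + cu < cl' + cu') :
    ∃ e' : ℝ, 0 < e' ∧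
      sigma2 p C v ρ1 ρ2 cl' cu' (ξe cl' cu' e') /
          (mfun p C v ρ1 ρ2 cl' cu' (ξe cl' cu' e')) ^ 2 <
      sigma2 p C v ρ1 ρ2 cl cu (ξe cl cu e) /
          (mfun p C v ρ1 ρ2 cl cu (ξe cl cu e)) ^ 2 := by
  obtain ⟨hξm0, hξm1⟩ := hξm
  have hcl'0 : 0 < cl' := lt_of_lt_of_le hcl hcl'
  have hcu'0 : 0 < cu' := lt_of_lt_of_le hcu hcu'
  -- ξsup facts
  have hsup_le : ∀ u : ℝ, 0 < u → ξsup u ≤ ξm := by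
    intro u hu
    rcases em (∀ ξ ∈ Set.Ioo (0:ℝ) ξm, qfun p C ξ < u) with h | h
    · rw [(hξsup u hu).1 h]
    · exact ((hξsup u hu).2 h).1.2
  have hq_lt : ∀ u : ℝ, 0 < u → ∀ ξ : ℝ, 0 < ξ → ξ < ξsup u → qfun p C ξ < u := by
    intro u hu ξ h0 hlt
    rcases em (∀ ξ ∈ Set.Ioo (0:ℝ) ξm, qfun p C ξ < u) with h | h
    · refine h ξ ⟨h0, ?_⟩
      have := (hξsup u hu).1 h
      rwa [this] at hlt
    · obtain ⟨⟨hs0, hsm⟩, hqeq⟩ := (hξsup u hu).2 h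
      have hmono : qfun p C ξ < qfun p C (ξsup u) :=
        qfun_mono hC hlmax hp h0 hlt (lt_of_le_of_lt hsm hξm1)
      rwa [hqeq] at hmono
  have hsup_mono : ξsup cu ≤ ξsup cu' := by
    rcases em (∀ ξ ∈ Set.Ioo (0:ℝ) ξm, qfun p C ξ < cu) with h | h
    · have h' : ∀ ξ ∈ Set.Ioo (0:ℝ) ξm, qfun p C ξ < cu' :=
        fun ξ hξ => lt_of_lt_of_le (h ξ hξ) hcu'
      rw [(hξsup cu hcu).1 h, (hξsup cu' hcu'0).1 h']
    · obtain ⟨⟨hs0, hsm⟩, hqeq⟩ := (hξsup cu hcu).2 h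
      by_contra hlt
      push_neg at hlt
      rcases em (∀ ξ ∈ Set.Ioo (0:ℝ) ξm, qfun p C ξ < cu') with h' | h'
      · rw [(hξsup cu' hcu'0).1 h'] at hlt
        linarith
      · obtain ⟨⟨hs0', hsm'⟩, hqeq'⟩ := (hξsup cu' hcu'0).2 h'
        have : qfun p C (ξsup cu') < qfun p C (ξsup cu) :=
          qfun_mono hC hlmax hp hs0' hlt (lt_of_le_of_lt hsm hξm1)
        rw [hqeq, hqeq'] at this
        linarith
  -- the point x = ξe cl cu e
  obtain ⟨hxmem, hxeq⟩ := hξe cl cu e hcl hcu he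
  set x := ξe cl cu e with hxdef
  obtain ⟨hx0, hxsup⟩ := hxmem
  have hxm : x < ξm := lt_of_lt_of_le hxsup (hsup_le cu hcu)
  have hxlm : x < lmax⁻¹ := lt_trans hxm hξm1
  have ht0 : 0 < theta p C v ρ1 ρ2 x := theta_pos hC hlmax hv hρ1 hρ2 hx0 hxlm
  have ht1 : theta p C v ρ1 ρ2 x < 1 := by
    have := theta_mono hC hlmax hv hρ1 hρ2 hx0 hxm hξm1
    rwa [hθξm] at this
  have hQpos : 0 < qfun p C x := qfun_pos hC hlmax hp hx0 hxlm
  have hQcu : qfun p C x < cu := hq_lt cu hcu x hx0 hxsup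
  have hxsup' : x < ξsup cu' := lt_of_lt_of_le hxsup hsup_mono
  have hQcu' : qfun p C x < cu' := hq_lt cu' hcu'0 x hx0 hxsup'
  have hSpos : 0 < sfun p C v ρ1 ρ2 x := sfun_pos hC hlmax hv hρ1 hρ2 hx0 hxlm
  -- positivity of m', σ2' at x
  have hm'pos : 0 < mfun p C v ρ1 ρ2 cl' cu' x := by
    rw [mfun]
    apply div_pos (by positivity)
    have : (0:ℝ) < 1 - theta p C v ρ1 ρ2 x := by linarith
    positivity
  have hσ'pos : 0 < sigma2 p C v ρ1 ρ2 cl' cu' x := by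
    rw [sigma2]
    apply div_pos ?_ (by nlinarith)
    have h1 : 0 < (2 * cl' + mfun p C v ρ1 ρ2 cl' cu' x * cu') ^ 2 := by positivity
    have h2 : 0 < 4 * cl' + (mfun p C v ρ1 ρ2 cl' cu' x) ^ 2 * cu' := by positivity
    have hρ := mul_pos hρ1 hρ2
    nlinarith [mul_pos (mul_pos hρ h1) hSpos, mul_pos (mul_pos hρ h2) hQpos]
  set E := ρ1 * ρ2 * (mfun p C v ρ1 ρ2 cl' cu' x) ^ 2 + sigma2 p C v ρ1 ρ2 cl' cu' x
    with hEdef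
  have hE : 0 < E := by
    have hρ := mul_pos hρ1 hρ2
    have := sq_nonneg (mfun p C v ρ1 ρ2 cl' cu' x)
    nlinarith
  refine ⟨Real.sqrt E, Real.sqrt_pos.mpr hE, ?_⟩
  obtain ⟨hymem, hyeq⟩ := hξe cl' cu' (Real.sqrt E) hcl'0 hcu'0 (Real.sqrt_pos.mpr hE)
  set y := ξe cl' cu' (Real.sqrt E) with hydef
  obtain ⟨hy0, hysup⟩ := hymem
  rw [Real.sq_sqrt hE.le] at hyeq
  -- strict monotonicity of F on (0, ξsup cu')
  have Fstrict : ∀ ξ1 ξ2 : ℝ, 0 < ξ1 → ξ1 < ξ2 → ξ2 < ξsup cu' →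
      ρ1 * ρ2 * (mfun p C v ρ1 ρ2 cl' cu' ξ1) ^ 2 + sigma2 p C v ρ1 ρ2 cl' cu' ξ1 <
      ρ1 * ρ2 * (mfun p C v ρ1 ρ2 cl' cu' ξ2) ^ 2 + sigma2 p C v ρ1 ρ2 cl' cu' ξ2 := by
    intro ξ1 ξ2 h1 h12 h2
    have h2m : ξ2 < ξm := lt_of_lt_of_le h2 (hsup_le cu' hcu'0)
    have h2lm : ξ2 < lmax⁻¹ := lt_trans h2m hξm1
    have h1lm : ξ1 < lmax⁻¹ := lt_trans h12 h2lm
    have h20 : 0 < ξ2 := lt_trans h1 h12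
    have hθ1 : 0 < theta p C v ρ1 ρ2 ξ1 := theta_pos hC hlmax hv hρ1 hρ2 h1 h1lm
    have hθ12 : theta p C v ρ1 ρ2 ξ1 < theta p C v ρ1 ρ2 ξ2 :=
      theta_mono hC hlmax hv hρ1 hρ2 h1 h12 h2lm
    have hθ2 : theta p C v ρ1 ρ2 ξ2 < 1 := by
      have := theta_mono hC hlmax hv hρ1 hρ2 h20 h2m hξm1
      rwa [hθξm] at this
    have hQ1 : 0 < qfun p C ξ1 := qfun_pos hC hlmax hp h1 h1lm
    have hQ12 : qfun p C ξ1 < qfun p C ξ2 := qfun_mono hC hlmax hp h1 h12 h2lm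
    have hQ2 : qfun p C ξ2 < cu' := hq_lt cu' hcu'0 ξ2 h20 h2
    have hS1 : 0 < sfun p C v ρ1 ρ2 ξ1 := sfun_pos hC hlmax hv hρ1 hρ2 h1 h1lm
    have hS12 : sfun p C v ρ1 ρ2 ξ1 < sfun p C v ρ1 ρ2 ξ2 :=
      sfun_mono hC hlmax hv hρ1 hρ2 h1 h12 h2lm
    simp only [sigma2, mfun]
    exact Fmono (ρ1 * ρ2) cl' cu' _ _ _ _ _ _ (mul_pos hρ1 hρ2) hcl'0 hcu'0
      hθ1 hθ12 hθ2 hQ1 hQ12 hQ2 hS1 hS12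
  have hxy : y = x := by
    rcases lt_trichotomy y x with h | h | h
    · exfalso
      have := Fstrict y x hy0 h hxsup'
      rw [hyeq] at this
      linarith
    · exact h
    · exfalso
      have := Fstrict x y hx0 h hysup
      rw [hyeq] at this
      linarith
  rw [hxy]
  simp only [sigma2, mfun]
  exact ratio_lt (ρ1 * ρ2) _ _ _ cl cu cl' cu' (mul_pos hρ1 hρ2) ht0 ht1 hQpos hSpos
    hcl hcu hQcu hQcu' hcl' hcu' hsum
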